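/- Let K = (G,M,I) be a finite formal context. Then the ordinal scaling dimension of K equals the width of the partially ordered set (under set inclusion) of meet-irreducible extents of K. -/

import Mathlib

/-- `E` is an extent of the formal context `(G, M, I)`. -/
def IsExtent {G M : Type*} (I : G → M → Prop) (E : Set G) : Prop :=
  ∃ B : Set M, E = {g | ∀ m ∈ B, I g m}

/-- A meet-irreducible extent: an extent `E ≠ G` that is not the intersection of the
extents properly containing it. -/
def IsMeetIrreducibleExtent {G M : Type*} (I : G → M → Prop) (E : Set G) : Prop :=
  IsExtent I E ∧ E ≠ Set.univ ∧ E ≠ ⋂₀ {F | IsExtent I F ∧ E ⊂ F}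

/-- `K = (G, M, I)` has ordinal scaling dimension at most `d`: there are `d` chains of
subsets of `G` such that the extents of `K` are exactly the intersections `⋂₀ F` of
subfamilies `F` of the union of the chains (`⋂₀ ∅ = G`). -/
def HasOSDAtMost {G M : Type*} (I : G → M → Prop) (d : ℕ) : Prop :=
  ∃ C : Fin d → Set (Set G), (∀ i, IsChain (· ⊆ ·) (C i)) ∧
    {E | IsExtent I E} = {E | ∃ F ⊆ ⋃ i, C i, E = ⋂₀ F}

/-- The ordinal scaling dimension: the least `d` such that `HasOSDAtMost I d`. -/
noncomputable def osd {G M : Type*} (I : G → M → Prop) : ℕ :=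
  sInf {d | HasOSDAtMost I d}

/-- The width of a family `S` of subsets of `G`, partially ordered by inclusion: the
maximal cardinality of an antichain contained in `S`. -/
noncomputable def posetWidth {G : Type*} (S : Set (Set G)) : ℕ :=
  sSup {n | ∃ A ⊆ S, A.Finite ∧ IsAntichain (· ⊆ ·) A ∧ A.ncard = n}

open Classical in
/-- An antichain covggered by chains indexed by a finset `J` has at most `J.card` elements. -/
lemma antichain_card_le_chains {α : Type*} [PartialOrder α] {A : Finset α}
    (hA : IsAntichain (· ≤ ·) (A : Set α)) {k : ℕ} {C : Fin k → Set α}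
    (hC : ∀ i, IsChain (· ≤ ·) (C i)) (J : Finset (Fin k))
    (hcov : ∀ x ∈ A, ∃ i ∈ J, x ∈ C i) : A.card ≤ J.card := by
  rcases A.eq_empty_or_nonempty with rfl | ⟨x₀, hx₀⟩
  · simp
  obtain ⟨i₀, hi₀, -⟩ := hcov x₀ hx₀
  set f : α → Fin k := fun x => if h : ∃ i ∈ J, x ∈ C i then h.choose else i₀ with hf
  have hmem : ∀ x ∈ A, f x ∈ J ∧ x ∈ C (f x) := by
    intro x hx
    have h := hcov x hx
    simp only [hf, dif_pos h]
    exact ⟨h.choose_spec.1, h.choose_spec.2⟩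
  apply Finset.card_le_card_of_injOn f (fun x hx => (hmem x hx).1)
  intro x hx y hy hxy
  by_contra hne
  have hxC := (hmem x hx).2
  have hyC := (hmem y hy).2
  rw [hxy] at hxC
  rcases (hC (f y)).total hxC hyC with h | h
  · exact hA hx hy hne h
  · exact hA hy hx (Ne.symm hne) h

lemma empty_chain {α : Type*} [PartialOrder α] : IsChain (· ≤ ·) (((∅ : Finset α)) : Set α) := by
  simp only [Finset.coe_empty]
  exact Set.Subsingleton.isChain Set.subsingleton_empty

lemma singleton_chain {α : Type*} [PartialOrder α] (a : α) :
    IsChain (· ≤ ·) ((({a} : Finset α)) : Set α) := by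
  simp only [Finset.coe_singleton]
  exact Set.Subsingleton.isChain Set.subsingleton_singleton

/-- Assemble `w` chains plus one extra chain `K` into `k ≥ w+1` chains covering `S`. -/
lemma chains_snoc {α : Type*} [PartialOrder α] {S : Finset α} {w k : ℕ} (hwk : w < k)
    (C : Fin w → Finset α) (K : Finset α) (hCS : ∀ i, C i ⊆ S) (hKS : K ⊆ S)
    (hCch : ∀ i, IsChain (· ≤ ·) ((C i) : Set α)) (hKch : IsChain (· ≤ ·) (K : Set α))
    (hcov : ∀ x ∈ S, x ∈ K ∨ ∃ i, x ∈ C i) :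
    ∃ C' : Fin k → Finset α, (∀ i, C' i ⊆ S) ∧ (∀ i, IsChain (· ≤ ·) ((C' i) : Set α)) ∧
      ∀ x ∈ S, ∃ i, x ∈ C' i := by
  classical
  refine ⟨fun j => if h : (j : ℕ) < w then C ⟨j, h⟩ else if (j : ℕ) = w then K else ∅, ?_, ?_, ?_⟩
  · intro j
    by_cases h : (j : ℕ) < w
    · simpa [h] using hCS ⟨j, h⟩
    · by_cases h2 : (j : ℕ) = w
      · simp [h, h2, hKS]
      · simp [h, h2]
  · intro j
    by_cases h : (j : ℕ) < w
    · simpa [h] using hCch ⟨j, h⟩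
    · by_cases h2 : (j : ℕ) = w
      · simpa [h, h2] using hKch
      · simpa [h, h2] using empty_chain
  · intro x hx
    rcases hcov x hx with hxK | ⟨i, hi⟩
    · refine ⟨⟨w, hwk⟩, ?_⟩
      simp [hxK]
    · refine ⟨⟨i, i.isLt.trans hwk⟩, ?_⟩
      simpa [i.isLt] using hi

lemma dilworth_aux {α : Type*} [PartialOrder α] [DecidableEq α] :
    ∀ n : ℕ, ∀ S : Finset α, S.card ≤ n → ∀ k : ℕ,
      (∀ A : Finset α, A ⊆ S → IsAntichain (· ≤ ·) (A : Set α) → A.card ≤ k) →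
      ∃ C : Fin k → Finset α, (∀ i, C i ⊆ S) ∧ (∀ i, IsChain (· ≤ ·) ((C i) : Set α)) ∧
        ∀ x ∈ S, ∃ i, x ∈ C i := by
  classical
  intro n
  induction n with
  | zero =>
      intro S hS k _
      have : S = ∅ := Finset.card_eq_zero.1 (Nat.le_zero.1 hS)
      exact ⟨fun _ => ∅, fun _ => by simp, fun _ => empty_chain, by simp [this]⟩
  | succ n ih =>
      intro S hScard k hk
      rcases S.eq_empty_or_nonempty with rfl | hSne
      · exact ⟨fun _ => ∅, fun _ => by simp, fun _ => empty_chain, by simp⟩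
      -- pick a maximal element a of S
      obtain ⟨a, haS, hamax⟩ : ∃ a ∈ S, ∀ x ∈ S, ¬ a < x := by
        obtain ⟨a, ha⟩ := Finset.exists_maximal hSne
        exact ⟨a, ha.1, fun x hx hlt => hlt.not_ge (ha.2 hx hlt.le)⟩
      set S' : Finset α := S.erase a with hS'
      have hS'card : S'.card ≤ n := by
        have h1 := Finset.card_erase_of_mem haS
        have h2 : 1 ≤ S.card := Finset.card_pos.2 hSne
        rw [hS', h1]
        omega
      have hS'S : S' ⊆ S := Finset.erase_subset a S
      -- the width of S'
      set T : Set ℕ :=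
        {m | ∃ A : Finset α, A ⊆ S' ∧ IsAntichain (· ≤ ·) (A : Set α) ∧ A.card = m} with hT
      have hT0 : (0 : ℕ) ∈ T := ⟨∅, by simp, by simp [IsAntichain], by simp⟩
      have hTbdd : BddAbove T := by
        refine ⟨k, fun m hm => ?_⟩
        obtain ⟨A, hAS, hAac, hAcard⟩ := hm
        exact hAcard ▸ hk A (hAS.trans hS'S) hAac
      set w' : ℕ := sSup T with hw'
      have hw'T : w' ∈ T := Nat.sSup_mem ⟨0, hT0⟩ hTbdd
      have hle : ∀ m ∈ T, m ≤ w' := fun m hm => le_csSup hTbdd hm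
      have hw'k : w' ≤ k := by
        obtain ⟨A, hAS, hAac, hAcard⟩ := hw'T
        exact hAcard ▸ hk A (hAS.trans hS'S) hAac
      -- cover S' by w' chains
      obtain ⟨C, hCS, hCch, hCcov⟩ := ih S' hS'card w' (fun A hAS hAac => hle _ ⟨A, hAS, hAac, rfl⟩)
      -- every w'-antichain in S' meets every chain (when w' ≥ 1)
      have hmeet : 1 ≤ w' → ∀ (A : Finset α), A ⊆ S' → IsAntichain (· ≤ ·) (A : Set α) →
          A.card = w' → ∀ i : Fin w', ∃ x ∈ A, x ∈ C i := by
        intro hw1 A hAS hAac hAcard i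
        by_contra h
        push_neg at h
        have hb : A.card ≤ (Finset.univ.erase i).card := by
          refine antichain_card_le_chains hAac (fun j => hCch j) (Finset.univ.erase i) ?_
          intro x hx
          obtain ⟨j, hj⟩ := hCcov x (hAS hx)
          refine ⟨j, Finset.mem_erase.2 ⟨?_, Finset.mem_univ _⟩, hj⟩
          rintro rfl
          exact h x hx hj
        rw [Finset.card_erase_of_mem (Finset.mem_univ i), Finset.card_univ,
          Fintype.card_fin] at hb
        omega
      -- the relevant part of each chain, and its maximum element
      set D : Fin w' → Finset α := fun i => (C i).filter
        (fun x => ∃ A : Finset α, A ⊆ S' ∧ IsAntichain (· ≤ ·) (A : Set α) ∧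
          A.card = w' ∧ x ∈ A) with hD
      have hDC : ∀ i, D i ⊆ C i := fun i => Finset.filter_subset _ _
      have hDmax : ∀ i : Fin w', (D i).Nonempty → ∃ z ∈ D i, ∀ y ∈ D i, y ≤ z := by
        intro i hne
        obtain ⟨z, hz, hzmax⟩ : ∃ z ∈ D i, ∀ x ∈ D i, ¬ z < x := by
          obtain ⟨z, hz⟩ := Finset.exists_maximal hne
          exact ⟨z, hz.1, fun x hx hlt => hlt.not_ge (hz.2 hx hlt.le)⟩
        refine ⟨z, hz, fun y hy => ?_⟩
        rcases eq_or_ne y z with rfl | hne'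
        · exact le_refl _
        rcases (hCch i).total (hDC i hy) (hDC i hz) with h | h
        · exact h
        · exact absurd (lt_of_le_of_ne h (Ne.symm hne')) (hzmax y hy)
      -- degenerate case: w' = 0, i.e. S' = ∅ and S = {a}
      rcases Nat.eq_zero_or_pos w' with hw0 | hw1
      · have hS'empty : S' = ∅ := by
          by_contra hne
          obtain ⟨x, hx⟩ := Finset.nonempty_of_ne_empty hne
          have h1 : (1 : ℕ) ∈ T := by
            refine ⟨{x}, Finset.singleton_subset_iff.2 hx, ?_, Finset.card_singleton x⟩
            simp only [Finset.coe_singleton]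
            exact Set.Subsingleton.isAntichain Set.subsingleton_singleton _
          have := hle 1 h1
          omega
        have hk1 : 1 ≤ k := by
          have := hk {a} (Finset.singleton_subset_iff.2 haS) (by
            simp only [Finset.coe_singleton]
            exact Set.Subsingleton.isAntichain Set.subsingleton_singleton _)
          simpa using this
        refine chains_snoc (w := 0) (by omega) (fun i => (i.elim0 : Finset α)) {a}
          (fun i => i.elim0) (Finset.singleton_subset_iff.2 haS) (fun i => i.elim0)
          (singleton_chain a) ?_
        intro x hx
        left
        rcases eq_or_ne x a with rfl | hne
        · exact Finset.mem_singleton_self x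
        · have hxS' : x ∈ S' := Finset.mem_erase.2 ⟨hne, hx⟩
          rw [hS'empty] at hxS'
          exact absurd hxS' (Finset.notMem_empty x)
      -- now w' ≥ 1 : each D i is nonempty, pick its maximum m i
      have hDne : ∀ i : Fin w', ∃ z, z ∈ D i ∧ ∀ y ∈ D i, y ≤ z := by
        intro i
        obtain ⟨A₀, hA₀S, hA₀ac, hA₀card⟩ := hw'T
        obtain ⟨x, hxA, hxC⟩ := hmeet hw1 A₀ hA₀S hA₀ac hA₀card i
        have : (D i).Nonempty :=
          ⟨x, Finset.mem_filter.2 ⟨hxC, A₀, hA₀S, hA₀ac, hA₀card, hxA⟩⟩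
        obtain ⟨z, hz, hmax⟩ := hDmax i this
        exact ⟨z, hz, hmax⟩
      choose m hmD hmmax using hDne
      have hmC : ∀ i, m i ∈ C i := fun i => hDC i (hmD i)
      have hmS' : ∀ i, m i ∈ S' := fun i => hCS i (hmC i)
      have hmwit : ∀ i, ∃ A : Finset α, A ⊆ S' ∧ IsAntichain (· ≤ ·) (A : Set α) ∧
          A.card = w' ∧ m i ∈ A := fun i => (Finset.mem_filter.1 (hmD i)).2
      -- key comparison fact : if m i ≤ m j with m i ≠ m j then contradiction
      have hmcomp : ∀ i j : Fin w', m i ≠ m j → ¬ m i ≤ m j := by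
        intro i j hne hlem
        have hij : i ≠ j := by rintro rfl; exact hne rfl
        obtain ⟨A, hAS, hAac, hAcard, hmjA⟩ := hmwit j
        obtain ⟨y, hyA, hyC⟩ := hmeet hw1 A hAS hAac hAcard i
        have hyD : y ∈ D i := Finset.mem_filter.2 ⟨hyC, A, hAS, hAac, hAcard, hyA⟩
        have hy_le : y ≤ m j := (hmmax i y hyD).trans hlem
        have hyne : y ≠ m j := by
          rintro rfl
          exact hne (le_antisymm hlem (hmmax i _ hyD))
        exact hAac hyA hmjA hyne hy_le
      -- m is injective
      have hminj : Function.Injective m := by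
        intro i j hij
        by_contra hne
        obtain ⟨A, hAS, hAac, hAcard, hzA⟩ := hmwit i
        have hzCi : m i ∈ C i := hmC i
        have hzCj : m i ∈ C j := by rw [hij]; exact hmC j
        have hb : (A.erase (m i)).card ≤ ((Finset.univ.erase i).erase j).card := by
          refine antichain_card_le_chains (hAac.subset ?_) (fun t => hCch t) _ ?_
          · intro x hx
            exact Finset.mem_of_mem_erase (by exact_mod_cast hx)
          · intro x hx
            have hxA : x ∈ A := Finset.mem_of_mem_erase hx
            have hxne : x ≠ m i := Finset.ne_of_mem_erase hx
            obtain ⟨t, ht⟩ := hCcov x (hAS hxA)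
            have hnott : ∀ t' : Fin w', x ∈ C t' → m i ∈ C t' → False := by
              intro t' hx' hz'
              rcases (hCch t').total hx' hz' with h | h
              · exact hAac hxA hzA hxne h
              · exact hAac hzA hxA (Ne.symm hxne) h
            have hti : t ≠ i := by rintro rfl; exact hnott t ht hzCi
            have htj : t ≠ j := by rintro rfl; exact hnott t ht hzCj
            exact ⟨t, Finset.mem_erase.2 ⟨htj, Finset.mem_erase.2 ⟨hti, Finset.mem_univ _⟩⟩, ht⟩
        have hji : j ≠ i := Ne.symm hne
        have hcard2 : ((Finset.univ.erase i).erase j).card = w' - 1 - 1 := by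
          rw [Finset.card_erase_of_mem (Finset.mem_erase.2 ⟨hji, Finset.mem_univ _⟩),
            Finset.card_erase_of_mem (Finset.mem_univ i), Finset.card_univ, Fintype.card_fin]
        have hcard1 : (A.erase (m i)).card = w' - 1 := by
          rw [Finset.card_erase_of_mem hzA, hAcard]
        have hvne : (i : ℕ) ≠ (j : ℕ) := fun h => hne (Fin.ext h)
        have hiv := i.isLt
        have hjv := j.isLt
        omega
      by_cases hca : ∃ i, m i ≤ a
      · -- Case A: some maximal chain element below a
        obtain ⟨i, hia⟩ := hca
        set K : Finset α := insert a ((C i).filter (fun y => y ≤ m i)) with hK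
        have hfS : (C i).filter (fun y => y ≤ m i) ⊆ S :=
          (Finset.filter_subset _ _).trans ((hCS i).trans hS'S)
        have hKS : K ⊆ S := Finset.insert_subset haS hfS
        have haK : a ∈ K := Finset.mem_insert_self _ _
        have hKch : IsChain (· ≤ ·) (K : Set α) := by
          intro x hx y hy hne
          simp only [hK, Finset.coe_insert, Set.mem_insert_iff, Finset.coe_filter,
            Set.mem_setOf_eq] at hx hy
          rcases hx with rfl | ⟨hxC, hxle⟩
          · rcases hy with rfl | ⟨hyC, hyle⟩
            · exact absurd rfl hne
            · exact Or.inr (hyle.trans hia)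
          · rcases hy with rfl | ⟨hyC, hyle⟩
            · exact Or.inl (hxle.trans hia)
            · exact (hCch i).total hxC hyC
        set S₂ : Finset α := S \ K with hS₂
        have hS₂S : S₂ ⊆ S := Finset.sdiff_subset
        have hS₂card : S₂.card ≤ n := by
          have hsub : S₂ ⊆ S' := by
            intro x hx
            rw [Finset.mem_sdiff] at hx
            refine Finset.mem_erase.2 ⟨?_, hx.1⟩
            rintro rfl
            exact hx.2 haK
          exact (Finset.card_le_card hsub).trans hS'card
        have hS₂bound : ∀ A : Finset α, A ⊆ S₂ → IsAntichain (· ≤ ·) (A : Set α) →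
            A.card ≤ w' - 1 := by
          intro A hAS2 hAac
          have hAS' : A ⊆ S' := by
            intro x hx
            have := hAS2 hx
            rw [Finset.mem_sdiff] at this
            refine Finset.mem_erase.2 ⟨?_, this.1⟩
            rintro rfl
            exact this.2 haK
          have hAw : A.card ≤ w' := hle _ ⟨A, hAS', hAac, rfl⟩
          by_contra hcon
          have hAcard : A.card = w' := by omega
          obtain ⟨x, hxA, hxC⟩ := hmeet hw1 A hAS' hAac hAcard i
          have hxD : x ∈ D i := Finset.mem_filter.2 ⟨hxC, A, hAS', hAac, hAcard, hxA⟩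
          have hxK : x ∈ K := Finset.mem_insert.2
            (Or.inr (Finset.mem_filter.2 ⟨hxC, hmmax i x hxD⟩))
          have := hAS2 hxA
          rw [Finset.mem_sdiff] at this
          exact this.2 hxK
        obtain ⟨C₂, hC₂S, hC₂ch, hC₂cov⟩ := ih S₂ hS₂card (w' - 1) hS₂bound
        refine chains_snoc (w := w' - 1) (by omega) C₂ K
          (fun t => (hC₂S t).trans hS₂S) hKS hC₂ch hKch ?_
        intro x hx
        by_cases hxK : x ∈ K
        · exact Or.inl hxK
        · exact Or.inr (hC₂cov x (Finset.mem_sdiff.2 ⟨hx, hxK⟩))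
      · -- Case B: no maximal chain element below a, get a (w'+1)-antichain
        push_neg at hca
        have hmna : ∀ i, m i ≠ a := by
          intro i h
          have h2 : m i ∈ S.erase a := hmS' i
          rw [h] at h2
          exact (Finset.mem_erase.1 h2).1 rfl
        have hanm : ∀ i, ¬ a ≤ m i := by
          intro i h
          exact hamax (m i) (hS'S (hmS' i)) (lt_of_le_of_ne h (Ne.symm (hmna i)))
        set Bset : Finset α := insert a (Finset.image m Finset.univ) with hB
        have hBac : IsAntichain (· ≤ ·) (Bset : Set α) := by
          intro x hx y hy hne hxy
          simp only [hB, Finset.coe_insert, Set.mem_insert_iff, Finset.coe_image,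
            Set.mem_image, Finset.mem_coe, Finset.mem_univ, true_and] at hx hy
          rcases hx with rfl | ⟨i, _, rfl⟩
          · rcases hy with rfl | ⟨j, _, rfl⟩
            · exact hne rfl
            · exact hanm j hxy
          · rcases hy with rfl | ⟨j, _, rfl⟩
            · exact hca i hxy
            · exact hmcomp i j hne hxy
        have hBS : Bset ⊆ S := by
          rw [hB, Finset.insert_subset_iff]
          refine ⟨haS, ?_⟩
          intro x hx
          obtain ⟨i, _, rfl⟩ := Finset.mem_image.1 hx
          exact hS'S (hmS' i)
        have hBcard : Bset.card = w' + 1 := by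
          rw [hB, Finset.card_insert_of_notMem, Finset.card_image_of_injective _ hminj,
            Finset.card_univ, Fintype.card_fin]
          intro h
          obtain ⟨i, _, hi⟩ := Finset.mem_image.1 h
          exact hmna i hi
        have hw1k : w' + 1 ≤ k := hBcard ▸ hk Bset hBS hBac
        refine chains_snoc (w := w') (by omega) C {a}
          (fun t => (hCS t).trans hS'S) (Finset.singleton_subset_iff.2 haS) hCch
          (singleton_chain a) ?_
        intro x hx
        rcases eq_or_ne x a with rfl | hne
        · exact Or.inl (Finset.mem_singleton_self x)
        · exact Or.inr (hCcov x (Finset.mem_erase.2 ⟨hne, hx⟩))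

lemma isExtent_sInter {G M : Type*} {I : G → M → Prop} {F : Set (Set G)}
    (h : ∀ E ∈ F, IsExtent I E) : IsExtent I (⋂₀ F) := by
  choose B hB using h
  refine ⟨⋃ (E : Set G) (hE : E ∈ F), B E hE, ?_⟩
  ext g
  simp only [Set.mem_sInter, Set.mem_setOf_eq, Set.mem_iUnion]
  constructor
  · rintro hg m ⟨E, hE, hm⟩
    have := hg E hE
    rw [hB E hE] at this
    exact this m hm
  · intro hg E hE
    rw [hB E hE]
    intro m hm
    exact hg m ⟨E, hE, hm⟩

lemma mi_aux {G M : Type*} [Finite G] {I : G → M → Prop} :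
    ∀ n : ℕ, ∀ E : Set G, IsExtent I E → ({F | IsExtent I F ∧ E ⊂ F}).ncard ≤ n →
      ⋂₀ {F | IsMeetIrreducibleExtent I F ∧ E ⊆ F} ⊆ E := by
  intro n
  induction n with
  | zero =>
      intro E hE hcard
      by_cases hMI : IsMeetIrreducibleExtent I E
      · exact Set.sInter_subset_of_mem ⟨hMI, subset_rfl⟩
      by_cases hU : E = Set.univ
      · rw [hU]; exact Set.subset_univ _
      have hEq : E = ⋂₀ {F | IsExtent I F ∧ E ⊂ F} := by
        by_contra h
        exact hMI ⟨hE, hU, h⟩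
      have hfin : ({F | IsExtent I F ∧ E ⊂ F}).Finite := Set.toFinite _
      have hempty : {F | IsExtent I F ∧ E ⊂ F} = ∅ :=
        (Set.ncard_eq_zero hfin).1 (Nat.le_zero.1 hcard)
      rw [hempty, Set.sInter_empty] at hEq
      exact absurd hEq hU
  | succ n ih =>
      intro E hE hcard
      by_cases hMI : IsMeetIrreducibleExtent I E
      · exact Set.sInter_subset_of_mem ⟨hMI, subset_rfl⟩
      by_cases hU : E = Set.univ
      · rw [hU]; exact Set.subset_univ _
      have hEq : E = ⋂₀ {F | IsExtent I F ∧ E ⊂ F} := by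
        by_contra h
        exact hMI ⟨hE, hU, h⟩
      intro x hx
      rw [hEq]
      intro F hF
      have hfin : ({F | IsExtent I F ∧ E ⊂ F}).Finite := Set.toFinite _
      have hsub : {F' | IsExtent I F' ∧ F ⊂ F'} ⊆ {F' | IsExtent I F' ∧ E ⊂ F'} \ {F} := by
        rintro F' ⟨hext, hlt⟩
        refine ⟨⟨hext, hF.2.trans hlt⟩, ?_⟩
        rintro rfl
        exact (lt_irrefl F') hlt
      have hcard' : ({F' | IsExtent I F' ∧ F ⊂ F'}).ncard ≤ n := by
        have h1 : ({F' | IsExtent I F' ∧ E ⊂ F'} \ {F}).ncard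
            = ({F' | IsExtent I F' ∧ E ⊂ F'}).ncard - 1 :=
          Set.ncard_diff_singleton_of_mem hF
        have h2 := Set.ncard_le_ncard hsub hfin.diff
        omega
      have hIH := ih F hF.1 hcard'
      apply hIH
      intro F' hF'
      exact hx F' ⟨hF'.1, hF.2.subset.trans hF'.2⟩

lemma extents_eq_inters_mi {G M : Type*} [Finite G] (I : G → M → Prop) :
    {E | IsExtent I E} =
      {E : Set G | ∃ F ⊆ {X | IsMeetIrreducibleExtent I X}, E = ⋂₀ F} := by
  ext E
  constructor
  · intro hE
    refine ⟨{X | IsMeetIrreducibleExtent I X ∧ E ⊆ X}, fun X hX => hX.1, ?_⟩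
    refine subset_antisymm (Set.subset_sInter fun X hX => hX.2) ?_
    exact mi_aux _ E hE le_rfl
  · rintro ⟨F, hFsub, rfl⟩
    exact isExtent_sInter (fun X hX => (hFsub hX).1)

/-- For a finite formal context, the ordinal scaling dimension equals the
width of the ordered set of meet-irreducible extents. -/
theorem osd_eq_width_meet_irreducibles {G M : Type*} [Fintype G] [Fintype M]
    (I : G → M → Prop) :
    osd I = posetWidth {E | IsMeetIrreducibleExtent I E} := by
  classical
  set MIs : Set (Set G) := {E | IsMeetIrreducibleExtent I E} with hMIs
  set T : Set ℕ :=
    {n | ∃ A ⊆ MIs, A.Finite ∧ IsAntichain (· ⊆ ·) A ∧ A.ncard = n} with hTdef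
  have hwidth : posetWidth MIs = sSup T := rfl
  have hT0 : (0 : ℕ) ∈ T := ⟨∅, Set.empty_subset _, Set.finite_empty, by simp [IsAntichain], by simp⟩
  have hMIfin : MIs.Finite := Set.toFinite _
  have hTbdd : BddAbove T := by
    refine ⟨MIs.ncard, ?_⟩
    rintro n ⟨A, hAsub, hAfin, -, rfl⟩
    exact Set.ncard_le_ncard hAsub hMIfin
  set w : ℕ := sSup T with hwdef
  have hwT : w ∈ T := Nat.sSup_mem ⟨0, hT0⟩ hTbdd
  -- Step 1: HasOSDAtMost I w
  have h1 : HasOSDAtMost I w := by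
    obtain ⟨C, hCS, hCch, hCcov⟩ := dilworth_aux (hMIfin.toFinset.card) hMIfin.toFinset le_rfl w
      (by
        intro A hAsub hAac
        have hsub : (A : Set (Set G)) ⊆ MIs := by
          intro x hx
          have := hAsub hx
          rwa [Set.Finite.mem_toFinset] at this
        have : A.card ∈ T :=
          ⟨(A : Set (Set G)), hsub, A.finite_toSet, hAac, Set.ncard_coe_finset A⟩
        exact le_csSup hTbdd this)
    refine ⟨fun i => ((C i : Finset (Set G)) : Set (Set G)), fun i => hCch i, ?_⟩
    have hU : (⋃ i, ((C i : Finset (Set G)) : Set (Set G))) = MIs := by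
      apply subset_antisymm
      · intro X hX
        obtain ⟨i, hi⟩ := Set.mem_iUnion.1 hX
        have := hCS i hi
        rwa [Set.Finite.mem_toFinset] at this
      · intro X hX
        obtain ⟨i, hi⟩ := hCcov X (hMIfin.mem_toFinset.2 hX)
        exact Set.mem_iUnion.2 ⟨i, hi⟩
    rw [hU]
    exact extents_eq_inters_mi I
  -- Step 2: every bound d on OSD dominates w
  have h2 : ∀ d, HasOSDAtMost I d → w ≤ d := by
    rintro d ⟨C, hCch, hCext⟩
    have hXext : ∀ X ∈ ⋃ i, C i, IsExtent I X := by
      intro X hX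
      have hmem : X ∈ {E : Set G | ∃ F ⊆ ⋃ i, C i, E = ⋂₀ F} :=
        ⟨{X}, Set.singleton_subset_iff.2 hX, (Set.sInter_singleton X).symm⟩
      rw [← hCext] at hmem
      exact hmem
    have hMIcov : MIs ⊆ ⋃ i, C i := by
      intro E hE
      obtain ⟨hEext, hEuniv, hEne⟩ := hE
      have hmem : E ∈ {E | IsExtent I E} := hEext
      rw [hCext] at hmem
      obtain ⟨F, hFsub, hEF⟩ := hmem
      by_contra hnot
      have hstrict : ∀ X ∈ F, E ⊂ X := by
        intro X hX
        have hEX : E ⊆ X := hEF ▸ Set.sInter_subset_of_mem hX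
        refine hEX.ssubset_of_ne ?_
        rintro rfl
        exact hnot (hFsub hX)
      apply hEne
      apply subset_antisymm
      · exact Set.subset_sInter (fun F' hF' => hF'.2.subset)
      · calc ⋂₀ {F' | IsExtent I F' ∧ E ⊂ F'} ⊆ ⋂₀ F :=
              Set.sInter_subset_sInter (fun X hX => ⟨hXext X (hFsub hX), hstrict X hX⟩)
          _ = E := hEF.symm
    obtain ⟨A, hAsub, hAfin, hAac, hAcard⟩ := hwT
    have hcard : hAfin.toFinset.card ≤ d := by
      have := antichain_card_le_chains (A := hAfin.toFinset)
        (by rwa [Set.Finite.coe_toFinset]) (fun i => hCch i) Finset.univ ?_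
      · rwa [Finset.card_univ, Fintype.card_fin] at this
      · intro x hx
        rw [Set.Finite.mem_toFinset] at hx
        obtain ⟨i, hi⟩ := Set.mem_iUnion.1 (hMIcov (hAsub hx))
        exact ⟨i, Finset.mem_univ _, hi⟩
    rw [← hAcard, Set.ncard_eq_toFinset_card A hAfin]
    exact hcard
  rw [hwidth]
  unfold osd
  have h3 : w ∈ {d | HasOSDAtMost I d} := h1
  apply le_antisymm
  · exact Nat.sInf_le h3
  · exact h2 _ (Nat.sInf_mem (s := {d | HasOSDAtMost I d}) ⟨w, h3⟩)
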